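/- arXiv:0901.4888 — 10 statements merged into one kernel-verified Lean document; each statement's English description precedes it below -/
import Mathlib

section
/- Let L be a bounded distributive lattice and n ≥ 1. A function f : Lⁿ → L is a lattice polynomial function if and only if for every x ∈ Lⁿ and every k with 1 ≤ k ≤ n one has f(x) = med(f(x_k^0), x_k, f(x_k^1)). -/
open Classical

variable {L : Type*}

section Defs

variable [DistribLattice L] [BoundedOrder L]

/-- The ternary median term. -/
def med (x y z : L) : L := (x ⊔ y) ⊓ (x ⊔ z) ⊓ (y ⊔ z)

/-- Lattice polynomial functions of arity `n`: the smallest class of functions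
`(Fin n → L) → L` containing projections and constants and closed under
pointwise binary meets and joins. -/
inductive IsLatticePolynomial {n : ℕ} : ((Fin n → L) → L) → Prop
  | proj (k : Fin n) : IsLatticePolynomial fun x => x k
  | const (c : L) : IsLatticePolynomial fun _ => c
  | inf {f g : (Fin n → L) → L} :
      IsLatticePolynomial f → IsLatticePolynomial g →
      IsLatticePolynomial fun x => f x ⊓ g x
  | sup {f g : (Fin n → L) → L} :
      IsLatticePolynomial f → IsLatticePolynomial g →
      IsLatticePolynomial fun x => f x ⊔ g x

/-- Unary lattice polynomial functions: the smallest class of functions `L → L`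
containing the identity and constants and closed under pointwise binary meets
and joins. -/
inductive IsUnaryLatticePolynomial : (L → L) → Prop
  | id : IsUnaryLatticePolynomial fun x : L => x
  | const (c : L) : IsUnaryLatticePolynomial fun _ => c
  | inf {f g : L → L} :
      IsUnaryLatticePolynomial f → IsUnaryLatticePolynomial g →
      IsUnaryLatticePolynomial fun x => f x ⊓ g x
  | sup {f g : L → L} :
      IsUnaryLatticePolynomial f → IsUnaryLatticePolynomial g →
      IsUnaryLatticePolynomial fun x => f x ⊔ g x

/-- `h : L → L` preserves binary meets. -/
def PreservesInf (h : L → L) : Prop := ∀ x y : L, h (x ⊓ y) = h x ⊓ h y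

/-- `h : L → L` preserves binary joins. -/
def PreservesSup (h : L → L) : Prop := ∀ x y : L, h (x ⊔ y) = h x ⊔ h y

/-- Condition (H): `f(x ∧ c̄) = f(x) ∧ c` for all `c ∈ [f(0̄), f(1̄)]`. -/
def CondH {n : ℕ} (f : (Fin n → L) → L) : Prop :=
  ∀ (x : Fin n → L) (c : L), f (fun _ => ⊥) ≤ c → c ≤ f (fun _ => ⊤) →
    (f fun i => x i ⊓ c) = f x ⊓ c

/-- Condition (H*), the dual of (H): `f(x ∨ c̄) = f(x) ∨ c` for all `c ∈ [f(0̄), f(1̄)]`. -/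
def CondHDual {n : ℕ} (f : (Fin n → L) → L) : Prop :=
  ∀ (x : Fin n → L) (c : L), f (fun _ => ⊥) ≤ c → c ≤ f (fun _ => ⊤) →
    (f fun i => x i ⊔ c) = f x ⊔ c

/-- Condition (V): `f(x) = f(x ∧ c̄) ∨ f([x]_c)` for all `c ∈ [f(0̄), f(1̄)]`,
where the `i`-th component of `[x]_c` is `0` if `x i ≤ c`, and `x i` otherwise. -/
def CondV {n : ℕ} (f : (Fin n → L) → L) : Prop :=
  ∀ (x : Fin n → L) (c : L), f (fun _ => ⊥) ≤ c → c ≤ f (fun _ => ⊤) →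
    f x = (f fun i => x i ⊓ c) ⊔ (f fun i => if x i ≤ c then ⊥ else x i)

/-- Condition (V*), the dual of (V): `f(x) = f(x ∨ c̄) ∧ f([x]^c)` for all
`c ∈ [f(0̄), f(1̄)]`, where the `i`-th component of `[x]^c` is `1` if `c ≤ x i`,
and `x i` otherwise. -/
def CondVDual {n : ℕ} (f : (Fin n → L) → L) : Prop :=
  ∀ (x : Fin n → L) (c : L), f (fun _ => ⊥) ≤ c → c ≤ f (fun _ => ⊤) →
    f x = (f fun i => x i ⊔ c) ⊓ (f fun i => if c ≤ x i then ⊤ else x i)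

/-- Condition (I): `f(c̄) = c` for all `c ∈ [f(0̄), f(1̄)]`. -/
def CondI {n : ℕ} (f : (Fin n → L) → L) : Prop :=
  ∀ c : L, f (fun _ => ⊥) ≤ c → c ≤ f (fun _ => ⊤) → f (fun _ => c) = c

/-- A subset `S` of `L` is convex if `a ≤ b ≤ c` with `a, c ∈ S` implies `b ∈ S`. -/
def IsConvexSubset (S : Set L) : Prop :=
  ∀ ⦃a b c : L⦄, a ∈ S → c ∈ S → a ≤ b → b ≤ c → b ∈ S

/-- For every function `g = f_K^a` obtained from `f` by substituting constants for
variables (including `K = ∅`, i.e. `g = f`), the diagonal `δ_g` preserves binary meets.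
Here `δ_{f_K^a}(x) = f(y)` where `y i = a i` for `i ∈ K` and `y i = x` otherwise. -/
def DiagSubstPreservesInf {n : ℕ} (f : (Fin n → L) → L) : Prop :=
  ∀ (K : Set (Fin n)) (a : Fin n → L) (x y : L),
    (f fun i => if i ∈ K then a i else x ⊓ y) =
      (f fun i => if i ∈ K then a i else x) ⊓ (f fun i => if i ∈ K then a i else y)

/-- For every function `g = f_K^a` obtained from `f` by substituting constants for
variables (including `K = ∅`, i.e. `g = f`), the diagonal `δ_g` preserves binary joins. -/
def DiagSubstPreservesSup {n : ℕ} (f : (Fin n → L) → L) : Prop :=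
  ∀ (K : Set (Fin n)) (a : Fin n → L) (x y : L),
    (f fun i => if i ∈ K then a i else x ⊔ y) =
      (f fun i => if i ∈ K then a i else x) ⊔ (f fun i => if i ∈ K then a i else y)

end Defs

section Aux

variable [DistribLattice L] [BoundedOrder L]

lemma IsLatticePolynomial.monotone {n : ℕ} {f : (Fin n → L) → L}
    (hf : IsLatticePolynomial f) : Monotone f := by
  induction hf with
  | proj k => exact fun x y h => h k
  | const c => exact monotone_const
  | inf hf hg ihf ihg => exact ihf.inf ihg
  | sup hf hg ihf ihg => exact ihf.sup ihg

lemma med_eq_of_le' {a t b : L} (h : a ≤ b) : med a t b = (a ⊔ t) ⊓ b := by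
  unfold med
  rw [sup_eq_right.mpr h, inf_assoc, inf_eq_left.mpr (le_sup_right : b ≤ t ⊔ b)]

lemma med_eq_of_le {a t b : L} (h : a ≤ b) : med a t b = a ⊔ (t ⊓ b) := by
  rw [med_eq_of_le' h, inf_sup_right, inf_eq_left.mpr h]

lemma med_self {c t : L} : med c t c = c := by simp [med]

lemma med_inf_med {a a' t b b' : L} (h : a ≤ b) (h' : a' ≤ b') :
    med a t b ⊓ med a' t b' = med (a ⊓ a') t (b ⊓ b') := by
  rw [med_eq_of_le h, med_eq_of_le h', med_eq_of_le (inf_le_inf h h')]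
  apply le_antisymm
  · rw [inf_sup_right, inf_sup_left, inf_sup_left]
    refine sup_le (sup_le le_sup_left (le_sup_of_le_right ?_))
      (sup_le (le_sup_of_le_right ?_) (le_sup_of_le_right ?_))
    · exact le_inf (inf_le_of_right_le inf_le_left)
        (le_inf (inf_le_left.trans h) (inf_le_of_right_le inf_le_right))
    · exact le_inf (inf_le_of_left_le inf_le_left)
        (le_inf (inf_le_of_left_le inf_le_right) (inf_le_right.trans h'))
    · exact le_inf (inf_le_of_left_le inf_le_left)
        (le_inf (inf_le_of_left_le inf_le_right) (inf_le_of_right_le inf_le_right))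
  · refine sup_le (inf_le_inf le_sup_left le_sup_left) (le_inf ?_ ?_)
    · exact le_sup_of_le_right (le_inf inf_le_left (inf_le_of_right_le inf_le_left))
    · exact le_sup_of_le_right (le_inf inf_le_left (inf_le_of_right_le inf_le_right))

lemma med_sup_med {a a' t b b' : L} (h : a ≤ b) (h' : a' ≤ b') :
    med a t b ⊔ med a' t b' = med (a ⊔ a') t (b ⊔ b') := by
  rw [med_eq_of_le' h, med_eq_of_le' h', med_eq_of_le' (sup_le_sup h h')]
  apply le_antisymm
  · refine sup_le (inf_le_inf ?_ le_sup_left) (inf_le_inf ?_ le_sup_right)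
    · exact sup_le (le_sup_of_le_left le_sup_left) le_sup_right
    · exact sup_le (le_sup_of_le_left le_sup_right) le_sup_right
  · rw [sup_inf_left, sup_inf_right, sup_inf_right]
    refine le_inf (le_inf ?_ ?_) (le_inf ?_ ?_)
    · exact inf_le_left.trans (sup_le (sup_le (le_sup_of_le_left le_sup_left)
        (le_sup_of_le_right le_sup_left)) (le_sup_of_le_left le_sup_right))
    · exact inf_le_left.trans (sup_le (sup_le (h.trans le_sup_left)
        (le_sup_of_le_right le_sup_left)) (le_sup_of_le_right le_sup_right))
    · exact inf_le_left.trans (sup_le (sup_le (le_sup_of_le_left le_sup_left)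
        (h'.trans le_sup_right)) (le_sup_of_le_left le_sup_right))
    · exact inf_le_right

lemma update_bot_le_update_top {n : ℕ} (x : Fin n → L) (k : Fin n) :
    Function.update x k (⊥ : L) ≤ Function.update x k (⊤ : L) := by
  intro i
  rcases eq_or_ne i k with rfl | h
  · simp
  · simp [Function.update_of_ne h]

lemma poly_med_decomp {n : ℕ} {f : (Fin n → L) → L} (hf : IsLatticePolynomial f) :
    ∀ (x : Fin n → L) (k : Fin n),
        f x = med (f (Function.update x k ⊥)) (x k) (f (Function.update x k ⊤)) := by
  induction hf with
  | proj j =>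
    intro x k
    rcases eq_or_ne j k with rfl | hjk
    · simp [med]
    · simp [Function.update_of_ne hjk, med_self]
  | const c => intro x k; simp [med_self]
  | inf hf hg ihf ihg =>
    intro x k
    dsimp only
    rw [ihf x k, ihg x k,
      med_inf_med (hf.monotone (update_bot_le_update_top x k))
        (hg.monotone (update_bot_le_update_top x k))]
  | sup hf hg ihf ihg =>
    intro x k
    dsimp only
    rw [ihf x k, ihg x k,
      med_sup_med (hf.monotone (update_bot_le_update_top x k))
        (hg.monotone (update_bot_le_update_top x k))]

lemma med_decomp_poly {n : ℕ} {f : (Fin n → L) → L}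
    (hmed : ∀ (x : Fin n → L) (k : Fin n),
        f x = med (f (Function.update x k ⊥)) (x k) (f (Function.update x k ⊤))) :
    IsLatticePolynomial f := by
  have key : ∀ m ≤ n, ∀ a : Fin n → L,
      IsLatticePolynomial (fun x : Fin n → L => f (fun i => if (i : ℕ) < m then x i else a i)) := by
    intro m
    induction m with
    | zero =>
      intro _ a
      simpa using IsLatticePolynomial.const (L := L) (n := n) (f a)
    | succ m ih =>
      intro hm a
      have hmn : m < n := hm
      set k : Fin n := ⟨m, hmn⟩ with hk
      have hrw : ∀ (x : Fin n → L) (b : L),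
          f (Function.update (fun i => if (i : ℕ) < m + 1 then x i else a i) k b) =
          f (fun i => if (i : ℕ) < m then x i else (Function.update a k b) i) := by
        intro x b
        congr 1
        funext i
        rcases eq_or_ne i k with rfl | hik
        · simp [hk]
        · have hik' : (i : ℕ) ≠ m := fun h => hik (Fin.ext h)
          rw [Function.update_of_ne hik, Function.update_of_ne hik]
          rcases lt_or_ge (i : ℕ) m with h | h
          · simp [h, Nat.lt_succ_of_lt h]
          · have h1 : ¬ (i : ℕ) < m := not_lt.mpr h
            have h2 : ¬ (i : ℕ) < m + 1 := by omega
            simp [h1, h2]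
      have hthis : ∀ x : Fin n → L,
          f (fun i => if (i : ℕ) < m + 1 then x i else a i) =
          med (f (fun i => if (i : ℕ) < m then x i else (Function.update a k ⊥) i)) (x k)
            (f (fun i => if (i : ℕ) < m then x i else (Function.update a k ⊤) i)) := by
        intro x
        have := hmed (fun i => if (i : ℕ) < m + 1 then x i else a i) k
        rw [hrw x ⊥, hrw x ⊤] at this
        simpa [hk] using this
      have h0 := ih (le_of_lt hm) (Function.update a k ⊥)
      have h1 := ih (le_of_lt hm) (Function.update a k ⊤)
      have hgoal : IsLatticePolynomial (fun x : Fin n → L =>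
          med (f (fun i => if (i : ℕ) < m then x i else (Function.update a k ⊥) i)) (x k)
            (f (fun i => if (i : ℕ) < m then x i else (Function.update a k ⊤) i))) := by
        unfold med
        exact .inf (.inf (.sup h0 (.proj k)) (.sup h0 h1)) (.sup (.proj k) h1)
      have : (fun x : Fin n → L => f (fun i => if (i : ℕ) < m + 1 then x i else a i)) =
          (fun x : Fin n → L =>
          med (f (fun i => if (i : ℕ) < m then x i else (Function.update a k ⊥) i)) (x k)
            (f (fun i => if (i : ℕ) < m then x i else (Function.update a k ⊤) i))) :=
        funext hthis
      rw [this]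
      exact hgoal
  have := key n le_rfl (fun _ => ⊥)
  have heq : (fun x : Fin n → L => f (fun i => if (i : ℕ) < n then x i else ⊥)) = f := by
    funext x
    congr 1
    funext i
    simp [i.isLt]
  rwa [heq] at this

end Aux
/-- An `n`-ary function (`n ≥ 1`) on a bounded distributive lattice is a
lattice polynomial function iff it satisfies the median decomposition formula. -/
theorem isLatticePolynomial_iff_med_decomposition
    {L : Type*} [DistribLattice L] [BoundedOrder L] {n : ℕ} (hn : 1 ≤ n)
    (f : (Fin n → L) → L) :
    IsLatticePolynomial f ↔
      ∀ (x : Fin n → L) (k : Fin n),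
        f x = med (f (Function.update x k ⊥)) (x k) (f (Function.update x k ⊤)) := by
  constructor
  · exact fun hf => poly_med_decomp hf
  · exact fun h => med_decomp_poly h
end

section
/- Let L be a bounded distributive lattice and n ≥ 1. If a function f : Lⁿ → L satisfies f(x) = med(f(x_k^0), x_k, f(x_k^1)) for every x ∈ Lⁿ and every k with 1 ≤ k ≤ n, then f is order-preserving (monotone with respect to the componentwise order on Lⁿ). -/
open Classical

variable {L : Type*}

/-- A function satisfying the median decomposition formula is order-preserving. -/
theorem monotone_of_med_decomposition
    {L : Type*} [DistribLattice L] [BoundedOrder L] {n : ℕ} (hn : 1 ≤ n)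
    (f : (Fin n → L) → L)
    (hmed : ∀ (x : Fin n → L) (k : Fin n),
      f x = med (f (Function.update x k ⊥)) (x k) (f (Function.update x k ⊤))) :
    Monotone f := by
  have coord : ∀ (x : Fin n → L) (k : Fin n) {a b : L}, a ≤ b →
      f (Function.update x k a) ≤ f (Function.update x k b) := by
    intro x k a b hab
    have ha := hmed (Function.update x k a) k
    have hb := hmed (Function.update x k b) k
    simp only [Function.update_idem, Function.update_self] at ha hb
    rw [ha, hb]
    unfold med
    gcongr
  intro x y hxy
  have key : ∀ s : Finset (Fin n), f x ≤ f (fun i => if i ∈ s then y i else x i) := by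
    intro s
    induction s using Finset.induction with
    | empty => simp
    | insert k s hk ih =>
      have h1 : (fun i => if i ∈ insert k s then y i else x i) =
          Function.update (fun i => if i ∈ s then y i else x i) k (y k) := by
        funext i
        by_cases h : i = k
        · subst h; simp [hk]
        · simp [Function.update_of_ne h, h]
      have h2 : (fun i => if i ∈ s then y i else x i) =
          Function.update (fun i => if i ∈ s then y i else x i) k (x k) := by
        funext i
        by_cases h : i = k
        · subst h; simp [hk]
        · simp [Function.update_of_ne h]
      calc f x ≤ f (fun i => if i ∈ s then y i else x i) := ih
        _ ≤ f (fun i => if i ∈ insert k s then y i else x i) := by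
            rw [h1]
            conv_lhs => rw [h2]
            exact coord _ k (hxy k)
  have := key Finset.univ
  simpa using this
end

section
/- Let L be a bounded distributive lattice, n ≥ 1, and let f : Lⁿ → L be an order-preserving function. Then f is a lattice polynomial function if and only if the following all hold: (a) for every function g obtained from f by substituting constants for variables, the diagonal δ_g preserves ∧ and ∨, and δ_f preserves ∧ and ∨; (b) the set {f(x) : x ∈ Lⁿ} is convex; (c) for every a ∈ Lⁿ and every k with 1 ≤ k ≤ n, the set {f(a_k^x) : x ∈ L} is convex; and (d) f(x₁,…,x_{k−1}, f(x), x_{k+1},…,x_n) = f(x) for every x = (x₁,…,x_n) ∈ Lⁿ and every k with 1 ≤ k ≤ n. -/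
open Classical

variable {L : Type*}

section Aux

variable [DistribLattice L] [BoundedOrder L]

lemma ILP_congr {n : ℕ} {f g : (Fin n → L) → L} (h : IsLatticePolynomial f)
    (e : ∀ x, g x = f x) : IsLatticePolynomial g := by
  have hg : g = f := funext e
  rw [hg]; exact h

lemma unary_canonical {g : L → L} (h : IsUnaryLatticePolynomial g) :
    ∃ A B : L, ∀ u, g u = A ⊔ u ⊓ B := by
  induction h with
  | id => exact ⟨⊥, ⊤, by simp⟩
  | const c => exact ⟨c, ⊥, by simp⟩
  | inf h1 h2 ih1 ih2 =>
    obtain ⟨A, B, e1⟩ := ih1; obtain ⟨C, D, e2⟩ := ih2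
    refine ⟨A ⊓ C, A ⊓ D ⊔ B ⊓ C ⊔ B ⊓ D, fun u => ?_⟩
    simp only [e1, e2]
    simp [inf_sup_left, inf_sup_right, sup_assoc, sup_comm, sup_left_comm,
      inf_assoc, inf_comm, inf_left_comm, inf_idem]
  | sup h1 h2 ih1 ih2 =>
    obtain ⟨A, B, e1⟩ := ih1; obtain ⟨C, D, e2⟩ := ih2
    refine ⟨A ⊔ C, B ⊔ D, fun u => ?_⟩
    simp only [e1, e2]
    rw [inf_sup_left]
    simp [sup_assoc, sup_comm, sup_left_comm]

/-- Every "section" of a lattice polynomial, fixing constants on coordinates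
satisfying `P` and substituting one variable everywhere else, is a unary
lattice polynomial. -/
lemma section_unary {n : ℕ} {f : (Fin n → L) → L} (h : IsLatticePolynomial f)
    (P : Fin n → Prop) (a : Fin n → L) :
    IsUnaryLatticePolynomial (fun u => f (fun i => if P i then a i else u)) := by
  induction h with
  | proj k =>
    by_cases hk : P k
    · simpa [hk] using IsUnaryLatticePolynomial.const (L := L) (a k)
    · simpa [hk] using IsUnaryLatticePolynomial.id (L := L)
  | const c => exact .const c
  | inf h1 h2 ih1 ih2 => exact .inf ih1 ih2
  | sup h1 h2 ih1 ih2 => exact .sup ih1 ih2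

lemma update_eq_ite {n : ℕ} (x : Fin n → L) (k : Fin n) (u : L) :
    Function.update x k u =
      fun i => @ite L (¬ i = k) (Classical.propDecidable _) (x i) u := by
  funext i
  by_cases h : i = k
  · subst h; rw [if_neg (by simp), Function.update_self]
  · rw [if_pos h, Function.update_of_ne h]

/-- The pivot (median) decomposition for lattice polynomials. -/
lemma pivot_of_polynomial {n : ℕ} {f : (Fin n → L) → L} (h : IsLatticePolynomial f)
    (x : Fin n → L) (k : Fin n) (u : L) :
    f (Function.update x k u) =
      f (Function.update x k ⊥) ⊔ u ⊓ f (Function.update x k ⊤) := by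
  obtain ⟨A, B, e⟩ := unary_canonical (section_unary h (fun i => ¬ i = k) x)
  have e' : ∀ v : L, f (Function.update x k v) = A ⊔ v ⊓ B := by
    intro v
    rw [update_eq_ite]
    exact e v
  rw [e' u, e' ⊥, e' ⊤, bot_inf_eq, sup_bot_eq, top_inf_eq, inf_sup_left,
    inf_comm u A, ← sup_assoc, sup_inf_self]

/-- Pivot decomposition implies polynomiality (DNF expansion by induction on
the set of free coordinates). -/
lemma polynomial_of_pivot {n : ℕ} (f : (Fin n → L) → L)
    (hp : ∀ (x : Fin n → L) (k : Fin n) (u : L),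
      f (Function.update x k u) =
        f (Function.update x k ⊥) ⊔ u ⊓ f (Function.update x k ⊤)) :
    IsLatticePolynomial f := by
  suffices h : ∀ T : Finset (Fin n), ∀ z : Fin n → L,
      IsLatticePolynomial (fun x => f (fun i => if i ∈ T then x i else z i)) by
    have h' := h Finset.univ (fun _ => ⊥)
    apply ILP_congr h'
    intro x; simp
  intro T
  induction T using Finset.induction_on with
  | empty =>
    intro z
    apply ILP_congr (IsLatticePolynomial.const (f z))
    intro x; simp
  | @insert k T hk ih =>
    intro z
    have e0 := ih (Function.update z k ⊥)
    have e1 := ih (Function.update z k ⊤)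
    have hpoly : IsLatticePolynomial (fun x : Fin n → L =>
        (f fun i => if i ∈ T then x i else Function.update z k ⊥ i) ⊔
          x k ⊓ (f fun i => if i ∈ T then x i else Function.update z k ⊤ i)) :=
      .sup e0 (.inf (.proj k) e1)
    apply ILP_congr hpoly
    intro x
    set y : Fin n → L := fun i => if i ∈ insert k T then x i else z i with hy
    have hyk : y k = x k := by simp [hy]
    have hupd : Function.update y k (x k) = y := by
      rw [← hyk]; exact Function.update_eq_self k y
    have h0 : Function.update y k ⊥ =
        (fun i => if i ∈ T then x i else Function.update z k ⊥ i) := by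
      funext i
      by_cases h : i = k
      · subst h; simp [hk]
      · simp [Function.update_of_ne h, hy, Finset.mem_insert, h]
    have h1 : Function.update y k ⊤ =
        (fun i => if i ∈ T then x i else Function.update z k ⊤ i) := by
      funext i
      by_cases h : i = k
      · subst h; simp [hk]
      · simp [Function.update_of_ne h, hy, Finset.mem_insert, h]
    calc f y = f (Function.update y k (x k)) := by rw [hupd]
      _ = f (Function.update y k ⊥) ⊔ x k ⊓ f (Function.update y k ⊤) := hp y k (x k)
      _ = _ := by rw [h0, h1]

/-- Pivot decomposition from conditions (a), (c), (d). -/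
lemma pivot_of_conditions {n : ℕ} (f : (Fin n → L) → L) (hf : Monotone f)
    (hinf : DiagSubstPreservesInf f) (hsup : DiagSubstPreservesSup f)
    (hc : ∀ (a : Fin n → L) (k : Fin n),
      IsConvexSubset (Set.range fun x : L => f (Function.update a k x)))
    (hd : ∀ (x : Fin n → L) (k : Fin n), f (Function.update x k (f x)) = f x)
    (x : Fin n → L) (k : Fin n) (u : L) :
    f (Function.update x k u) =
      f (Function.update x k ⊥) ⊔ u ⊓ f (Function.update x k ⊤) := by
  set g : L → L := fun v => f (Function.update x k v) with hg
  have hsec : ∀ v : L,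
      (fun i => @ite L (i ∈ ({i | ¬ i = k} : Set (Fin n))) (Classical.propDecidable _)
        (x i) v) = Function.update x k v := by
    intro v; funext i
    by_cases h : i = k
    · subst h
      rw [if_neg (by simp [Set.mem_setOf_eq]), Function.update_self]
    · rw [if_pos (by simp [Set.mem_setOf_eq, h]), Function.update_of_ne h]
  have ghomi : ∀ v w : L, g (v ⊓ w) = g v ⊓ g w := by
    intro v w
    have h2 := hinf {i | ¬ i = k} x v w
    rw [hsec, hsec, hsec] at h2
    exact h2
  have ghoms : ∀ v w : L, g (v ⊔ w) = g v ⊔ g w := by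
    intro v w
    have h2 := hsup {i | ¬ i = k} x v w
    rw [hsec, hsec, hsec] at h2
    exact h2
  have gidem : ∀ v : L, g (g v) = g v := by
    intro v
    have := hd (Function.update x k v) k
    rwa [Function.update_idem] at this
  have gmono : ∀ v w : L, v ≤ w → g v ≤ g w := by
    intro v w hvw
    apply hf
    intro i
    by_cases h : i = k
    · subst h; simpa using hvw
    · simp [Function.update_of_ne h]
  set A := g ⊥ with hA
  set B := g ⊤ with hB
  have hAg : ∀ v : L, A ≤ g v := fun v => gmono ⊥ v bot_le
  have hgB : ∀ v : L, g v ≤ B := fun v => gmono v ⊤ le_top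
  -- the element m = A ⊔ (u ⊓ B) is in the range of g, hence fixed by g
  have hm : A ⊔ u ⊓ B ∈ Set.range fun v : L => f (Function.update x k v) := by
    refine hc x k ⟨⊥, rfl⟩ ⟨⊤, rfl⟩ le_sup_left ?_
    exact sup_le (hAg ⊤) inf_le_right
  obtain ⟨v, hv⟩ := hm
  have hfix : g (A ⊔ u ⊓ B) = A ⊔ u ⊓ B := by
    rw [show (A ⊔ u ⊓ B : L) = g v from hv.symm, gidem]
  -- on the other hand, expand g (A ⊔ u ⊓ B) using the homomorphism properties
  have hexp : g (A ⊔ u ⊓ B) = g u := by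
    rw [ghoms, ghomi]
    have gA : g A = A := gidem ⊥
    have gB : g B = B := gidem ⊤
    rw [gA, gB]
    rw [inf_eq_left.mpr (hgB u), sup_eq_right.mpr (hAg u)]
  have : g u = A ⊔ u ⊓ B := by rw [← hexp, hfix]
  exact this

end Aux
/-- An order-preserving function `f : Lⁿ → L` (`n ≥ 1`) is a lattice
polynomial function iff (a) for every function `g` obtained from `f` by substituting
constants for variables (including `f` itself), `δ_g` preserves `∧` and `∨`,
(b) the range of `f` is convex, (c) each set `{f(a_k^x) : x ∈ L}` is convex, and
(d) `f(x₁,…,x_{k−1}, f(x), x_{k+1},…,x_n) = f(x)` for all `x` and `k`. -/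
theorem isLatticePolynomial_iff_diag_convex_strId
    {L : Type*} [DistribLattice L] [BoundedOrder L] {n : ℕ} (hn : 1 ≤ n)
    (f : (Fin n → L) → L) (hf : Monotone f) :
    IsLatticePolynomial f ↔
      (DiagSubstPreservesInf f ∧ DiagSubstPreservesSup f) ∧
      IsConvexSubset (Set.range f) ∧
      (∀ (a : Fin n → L) (k : Fin n),
        IsConvexSubset (Set.range fun x : L => f (Function.update a k x))) ∧
      (∀ (x : Fin n → L) (k : Fin n), f (Function.update x k (f x)) = f x) := by
  constructor
  · -- forward direction: polynomial implies all conditions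
    intro h
    -- canonical form of the diagonal sections over a set K
    have hsecK : ∀ (K : Set (Fin n)) (a : Fin n → L), ∃ A B : L,
        ∀ u : L, (f fun i => if i ∈ K then a i else u) = A ⊔ u ⊓ B := by
      intro K a
      exact unary_canonical (section_unary h (fun i => i ∈ K) a)
    have hsecU : ∀ (a : Fin n → L) (k : Fin n), ∃ A B : L,
        ∀ u : L, f (Function.update a k u) = A ⊔ u ⊓ B := by
      intro a k
      obtain ⟨A, B, e⟩ := unary_canonical (section_unary h (fun i => ¬ i = k) a)
      refine ⟨A, B, fun u => ?_⟩
      rw [update_eq_ite]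
      exact e u
    refine ⟨⟨?_, ?_⟩, ?_, ?_, ?_⟩
    · -- DiagSubstPreservesInf
      intro K a u v
      obtain ⟨A, B, e⟩ := hsecK K a
      rw [e, e, e, ← sup_inf_left, inf_inf_inf_comm, inf_idem]
    · -- DiagSubstPreservesSup
      intro K a u v
      obtain ⟨A, B, e⟩ := hsecK K a
      rw [e, e, e, inf_sup_right, sup_sup_sup_comm, sup_idem]
    · -- range of f is convex
      intro p b q hp hq hpb hbq
      obtain ⟨u, hu⟩ := hp
      obtain ⟨w, hw⟩ := hq
      obtain ⟨A, B, e⟩ := hsecK (∅ : Set (Fin n)) (fun _ => ⊥)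
      have e' : ∀ v : L, f (fun _ => v) = A ⊔ v ⊓ B := by
        intro v; have := e v; simpa using this
      have hAb : A ≤ b := by
        calc A = f (fun _ => ⊥) := by rw [e']; simp
          _ ≤ f u := hf (fun i => bot_le)
          _ = p := hu
          _ ≤ b := hpb
      have hbAB : b ≤ A ⊔ B := by
        calc b ≤ q := hbq
          _ = f w := hw.symm
          _ ≤ f (fun _ => ⊤) := hf (fun i => le_top)
          _ = A ⊔ ⊤ ⊓ B := e' ⊤
          _ = A ⊔ B := by rw [top_inf_eq]
      refine ⟨fun _ => b, ?_⟩
      rw [e' b]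
      apply le_antisymm (sup_le hAb inf_le_left)
      calc b = b ⊓ (A ⊔ B) := (inf_eq_left.mpr hbAB).symm
        _ = b ⊓ A ⊔ b ⊓ B := inf_sup_left b A B
        _ ≤ A ⊔ b ⊓ B := sup_le_sup inf_le_right (le_refl _)
    · -- sections have convex range
      intro a k p b q hp hq hpb hbq
      obtain ⟨s, hs'⟩ := hp
      obtain ⟨t, ht'⟩ := hq
      have hs : f (Function.update a k s) = p := hs'
      have ht : f (Function.update a k t) = q := ht'
      obtain ⟨A, B, e⟩ := hsecU a k
      have hAb : A ≤ b := by
        calc A ≤ A ⊔ s ⊓ B := le_sup_left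
          _ = f (Function.update a k s) := (e s).symm
          _ = p := hs
          _ ≤ b := hpb
      have hbAB : b ≤ A ⊔ B := by
        calc b ≤ q := hbq
          _ = f (Function.update a k t) := ht.symm
          _ = A ⊔ t ⊓ B := e t
          _ ≤ A ⊔ B := sup_le_sup (le_refl _) inf_le_right
      refine ⟨b, show f (Function.update a k b) = b from ?_⟩
      rw [e b]
      apply le_antisymm (sup_le hAb inf_le_left)
      calc b = b ⊓ (A ⊔ B) := (inf_eq_left.mpr hbAB).symm
        _ = b ⊓ A ⊔ b ⊓ B := inf_sup_left b A B
        _ ≤ A ⊔ b ⊓ B := sup_le_sup inf_le_right (le_refl _)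
    · -- strong idempotency
      intro x k
      obtain ⟨A, B, e⟩ := hsecU x k
      have hx : f x = A ⊔ x k ⊓ B := by
        rw [← e (x k), Function.update_eq_self]
      rw [hx, e]
      rw [inf_sup_right, inf_assoc, inf_idem, ← sup_assoc, sup_inf_self]
  · -- backward direction
    rintro ⟨⟨hinf, hsup⟩, _hb, hc, hd⟩
    apply polynomial_of_pivot
    exact pivot_of_conditions f hf hinf hsup hc hd
end

section
/- Let L be a bounded distributive lattice, n ≥ 1, and let f : Lⁿ → L be an order-preserving function. Then f is a lattice polynomial function if and only if: for every function g obtained from f by substituting constants for variables, the diagonal δ_g preserves ∨, and δ_f preserves ∨, and f satisfies condition (H) and condition (V). -/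
open Classical

variable {L : Type*}

section Aux

variable [DistribLattice L] [BoundedOrder L] {n : ℕ}

lemma IsLatticePolynomial.mono {f : (Fin n → L) → L} (h : IsLatticePolynomial f) :
    Monotone f := by
  induction h with
  | proj k => exact fun a b hab => hab k
  | const c => exact monotone_const
  | inf hf hg ihf ihg => exact fun a b hab => inf_le_inf (ihf hab) (ihg hab)
  | sup hf hg ihf ihg => exact fun a b hab => sup_le_sup (ihf hab) (ihg hab)

lemma unary_form {f : (Fin n → L) → L} (h : IsLatticePolynomial f)
    (K : Set (Fin n)) (a : Fin n → L) :
    ∃ p q : L, p ≤ q ∧ ∀ t : L, f (fun i => if i ∈ K then a i else t) = p ⊔ t ⊓ q := by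
  induction h with
  | proj k =>
    by_cases hk : k ∈ K
    · exact ⟨a k, a k, le_rfl, fun t => by simp [hk]⟩
    · exact ⟨⊥, ⊤, bot_le, fun t => by simp [hk]⟩
  | const c => exact ⟨c, c, le_rfl, fun t => by simp⟩
  | inf hf hg ihf ihg =>
    obtain ⟨p₁, q₁, h₁, e₁⟩ := ihf
    obtain ⟨p₂, q₂, h₂, e₂⟩ := ihg
    refine ⟨p₁ ⊓ p₂, q₁ ⊓ q₂, inf_le_inf h₁ h₂, fun t => ?_⟩
    simp only [e₁, e₂]
    apply le_antisymm
    · rw [inf_sup_right, inf_sup_left, inf_sup_left]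
      refine sup_le (sup_le le_sup_left ?_) (sup_le ?_ ?_)
      · -- p₁ ⊓ (t ⊓ q₂) ≤ t ⊓ (q₁ ⊓ q₂)
        refine le_sup_of_le_right (le_inf (inf_le_right.trans inf_le_left)
          (le_inf (inf_le_left.trans h₁) (inf_le_right.trans inf_le_right)))
      · -- t ⊓ q₁ ⊓ p₂ ≤ t ⊓ (q₁ ⊓ q₂)
        refine le_sup_of_le_right (le_inf (inf_le_left.trans inf_le_left)
          (le_inf (inf_le_left.trans inf_le_right) (inf_le_right.trans h₂)))
      · refine le_sup_of_le_right (le_inf (inf_le_left.trans inf_le_left)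
          (le_inf (inf_le_left.trans inf_le_right) (inf_le_right.trans inf_le_right)))
    · refine sup_le (le_inf (le_sup_of_le_left inf_le_left) (le_sup_of_le_left inf_le_right)) ?_
      refine le_inf (le_sup_of_le_right (le_inf inf_le_left
        (inf_le_right.trans inf_le_left))) (le_sup_of_le_right (le_inf inf_le_left
        (inf_le_right.trans inf_le_right)))
  | sup hf hg ihf ihg =>
    obtain ⟨p₁, q₁, h₁, e₁⟩ := ihf
    obtain ⟨p₂, q₂, h₂, e₂⟩ := ihg
    refine ⟨p₁ ⊔ p₂, q₁ ⊔ q₂, sup_le_sup h₁ h₂, fun t => ?_⟩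
    simp only [e₁, e₂]
    rw [inf_sup_left]
    -- p₁ ⊔ t ⊓ q₁ ⊔ (p₂ ⊔ t ⊓ q₂) = p₁ ⊔ p₂ ⊔ (t ⊓ q₁ ⊔ t ⊓ q₂)
    exact sup_sup_sup_comm p₁ (t ⊓ q₁) p₂ (t ⊓ q₂)

lemma diag_eval {f : (Fin n → L) → L} (h : IsLatticePolynomial f) :
    ∃ p q : L, ∀ t : L, f (fun _ => t) = p ⊔ t ⊓ q := by
  obtain ⟨p, q, -, hpq⟩ := unary_form h (∅ : Set (Fin n)) (fun _ => ⊥)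
  refine ⟨p, q, fun t => ?_⟩
  have e : (fun i => if i ∈ (∅ : Set (Fin n)) then (fun _ => (⊥ : L)) i else t)
      = (fun _ : Fin n => t) := by
    funext i; simp
  have h := hpq t
  simp only [Set.mem_empty_iff_false, if_false] at h
  exact h

lemma condI_of_poly {f : (Fin n → L) → L} (h : IsLatticePolynomial f) :
    CondI f := by
  obtain ⟨p, q, hpq⟩ := diag_eval h
  intro c hc0 hc1
  have hp : f (fun _ => (⊥ : L)) = p := by rw [hpq]; simp
  have hq : f (fun _ => (⊤ : L)) = p ⊔ q := by rw [hpq]; simp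
  rw [hpq]
  apply le_antisymm
  · exact sup_le (hp ▸ hc0) inf_le_left
  · calc c = c ⊓ (p ⊔ q) := (inf_eq_left.mpr (hq ▸ hc1)).symm
      _ = c ⊓ p ⊔ c ⊓ q := inf_sup_left c p q
      _ ≤ p ⊔ c ⊓ q := sup_le_sup_right inf_le_right _

lemma condH_of_poly {f : (Fin n → L) → L} (h : IsLatticePolynomial f) :
    CondH f := by
  have hf := h.mono
  intro x c hc0 hc1
  apply le_antisymm
  · refine le_inf (hf fun i => inf_le_left) ?_
    refine (hf fun i => inf_le_right (a := x i)).trans ?_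
    exact le_of_eq (condI_of_poly h c hc0 hc1)
  · have key : ∀ D : Finset (Fin n),
        f x ⊓ c ≤ f (fun i => if i ∈ D then x i ⊓ c else x i) := by
      intro D
      induction D using Finset.induction_on with
      | empty =>
        simp only [Finset.notMem_empty, if_false]
        exact inf_le_left
      | @insert j D hj ih =>
        set a : Fin n → L := fun i => if i ∈ D then x i ⊓ c else x i with ha
        obtain ⟨p, q, -, hpq⟩ := unary_form h {i | i ≠ j} a
        have h1 : f a = p ⊔ x j ⊓ q := by
          rw [← hpq (x j)]
          congr 1
          funext i
          by_cases hij : i = j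
          · rw [if_neg (fun hmem : i ∈ {i' : Fin n | i' ≠ j} => hmem hij)]
            simp [ha, hij, hj]
          · rw [if_pos (show i ∈ {i' : Fin n | i' ≠ j} from hij)]
        have h2 : f (fun i => if i ∈ insert j D then x i ⊓ c else x i)
            = p ⊔ (x j ⊓ c) ⊓ q := by
          rw [← hpq (x j ⊓ c)]
          congr 1
          funext i
          by_cases hij : i = j
          · rw [if_neg (fun hmem : i ∈ {i' : Fin n | i' ≠ j} => hmem hij),
              if_pos (show i ∈ insert j D by rw [hij]; exact Finset.mem_insert_self j D)]
            rw [hij]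
          · rw [if_pos (show i ∈ {i' : Fin n | i' ≠ j} from hij)]
            by_cases hD : i ∈ D
            · rw [if_pos (Finset.mem_insert_of_mem hD)]
              simp [ha, hD]
            · rw [if_neg (fun hmem => hij (by
                rcases Finset.mem_insert.mp hmem with h' | h'
                · exact h'
                · exact absurd h' hD))]
              simp [ha, hD]
        rw [h2]
        calc f x ⊓ c ≤ f a ⊓ c := le_inf ih inf_le_right
          _ = (p ⊔ x j ⊓ q) ⊓ c := by rw [h1]
          _ = p ⊓ c ⊔ x j ⊓ q ⊓ c := inf_sup_right p (x j ⊓ q) c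
          _ ≤ p ⊔ (x j ⊓ c) ⊓ q := by
              refine sup_le (inf_le_left.trans le_sup_left) (le_sup_of_le_right ?_)
              rw [inf_right_comm]
    have := key Finset.univ
    simpa using this

lemma dnf_of_poly {f : (Fin n → L) → L} (h : IsLatticePolynomial f) :
    ∀ x : Fin n → L, f x = (Finset.univ : Finset (Finset (Fin n))).sup
      (fun S => f (fun i => if i ∈ S then (⊤ : L) else ⊥) ⊓ S.inf x) := by
  induction h with
  | proj k =>
    intro x
    apply le_antisymm
    · refine le_trans (le_of_eq ?_) (Finset.le_sup (Finset.mem_univ ({k} : Finset (Fin n))))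
      simp
    · refine Finset.sup_le fun S _ => ?_
      by_cases hk : k ∈ S
      · simp only [hk, if_true, top_inf_eq]
        exact Finset.inf_le hk
      · simp [hk]
  | const c =>
    intro x
    apply le_antisymm
    · refine le_trans (le_of_eq ?_) (Finset.le_sup (Finset.mem_univ (∅ : Finset (Fin n))))
      simp
    · exact Finset.sup_le fun S _ => inf_le_left
  | @inf f g hf' hg' ihf ihg =>
    intro x
    have hfm := hf'.mono
    have hgm := hg'.mono
    show f x ⊓ g x = Finset.univ.sup
      (fun S : Finset (Fin n) => (f (fun i => if i ∈ S then (⊤ : L) else ⊥)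
        ⊓ g (fun i => if i ∈ S then (⊤ : L) else ⊥)) ⊓ S.inf x)
    rw [ihf x, ihg x]
    apply le_antisymm
    · rw [Finset.sup_inf_distrib_right]
      refine Finset.sup_le fun S _ => ?_
      rw [Finset.sup_inf_distrib_left]
      refine Finset.sup_le fun T _ => ?_
      refine le_trans ?_ (Finset.le_sup (Finset.mem_univ (S ∪ T)))
      have hfS : f (fun i => if i ∈ S then (⊤ : L) else ⊥)
          ≤ f (fun i => if i ∈ S ∪ T then (⊤ : L) else ⊥) := by
        refine hfm fun i => ?_
        by_cases hi : i ∈ S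
        · simp [hi, Finset.mem_union.mpr (Or.inl hi)]
        · simp [hi]
      have hgT : g (fun i => if i ∈ T then (⊤ : L) else ⊥)
          ≤ g (fun i => if i ∈ S ∪ T then (⊤ : L) else ⊥) := by
        refine hgm fun i => ?_
        by_cases hi : i ∈ T
        · simp [hi, Finset.mem_union.mpr (Or.inr hi)]
        · simp [hi]
      rw [Finset.inf_union]
      exact le_inf (le_inf ((inf_le_left.trans inf_le_left).trans hfS)
          ((inf_le_right.trans inf_le_left).trans hgT))
        (inf_le_inf inf_le_right inf_le_right)
    · refine Finset.sup_le fun S _ => ?_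
      refine le_inf ?_ ?_
      · refine le_trans ?_ (Finset.le_sup (Finset.mem_univ S))
        exact inf_le_inf_right _ inf_le_left
      · refine le_trans ?_ (Finset.le_sup (Finset.mem_univ S))
        exact inf_le_inf_right _ inf_le_right
  | @sup f g hf' hg' ihf ihg =>
    intro x
    show f x ⊔ g x = Finset.univ.sup
      (fun S : Finset (Fin n) => (f (fun i => if i ∈ S then (⊤ : L) else ⊥)
        ⊔ g (fun i => if i ∈ S then (⊤ : L) else ⊥)) ⊓ S.inf x)
    rw [ihf x, ihg x]
    apply le_antisymm
    · refine sup_le (Finset.sup_le fun S _ => ?_) (Finset.sup_le fun S _ => ?_)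
      · refine le_trans ?_ (Finset.le_sup (Finset.mem_univ S))
        exact inf_le_inf_right _ le_sup_left
      · refine le_trans ?_ (Finset.le_sup (Finset.mem_univ S))
        exact inf_le_inf_right _ le_sup_right
    · have leF : ∀ S : Finset (Fin n),
          (f fun i => if i ∈ S then (⊤ : L) else ⊥) ⊓ S.inf x ≤ Finset.univ.sup
            (fun S : Finset (Fin n) => (f fun i => if i ∈ S then (⊤ : L) else ⊥) ⊓ S.inf x) :=
        fun S => by apply Finset.le_sup (Finset.mem_univ S)
      have leG : ∀ S : Finset (Fin n),
          (g fun i => if i ∈ S then (⊤ : L) else ⊥) ⊓ S.inf x ≤ Finset.univ.sup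
            (fun S : Finset (Fin n) => (g fun i => if i ∈ S then (⊤ : L) else ⊥) ⊓ S.inf x) :=
        fun S => by apply Finset.le_sup (Finset.mem_univ S)
      refine Finset.sup_le fun S _ => ?_
      rw [inf_sup_right]
      exact sup_le ((leF S).trans le_sup_left) ((leG S).trans le_sup_right)

lemma auxId (a b d c : L) : a ⊓ (d ⊔ c) ⊓ (b ⊓ (d ⊔ c) ⊔ c) = a ⊓ (b ⊓ d ⊔ c) := by
  rw [inf_assoc]
  congr 1
  rw [inf_sup_left, inf_eq_right.mpr (inf_le_right : b ⊓ (d ⊔ c) ≤ d ⊔ c),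
    inf_eq_right.mpr (le_sup_right : c ≤ d ⊔ c), inf_sup_left, sup_assoc,
    sup_eq_right.mpr (inf_le_right : b ⊓ c ≤ c)]

lemma poly_finsetSup {ι : Type*} (s : Finset ι) (g : ι → (Fin n → L) → L)
    (hg : ∀ i ∈ s, IsLatticePolynomial (g i)) :
    IsLatticePolynomial (fun x => s.sup (fun i => g i x)) := by
  classical
  induction s using Finset.induction_on with
  | empty =>
    simp only [Finset.sup_empty]
    exact .const ⊥
  | @insert a s ha ih =>
    simp only [Finset.sup_insert]
    exact .sup (hg a (Finset.mem_insert_self a s))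
      (ih fun i hi => hg i (Finset.mem_insert_of_mem hi))

lemma poly_finsetInf {ι : Type*} (s : Finset ι) (g : ι → (Fin n → L) → L)
    (hg : ∀ i ∈ s, IsLatticePolynomial (g i)) :
    IsLatticePolynomial (fun x => s.inf (fun i => g i x)) := by
  classical
  induction s using Finset.induction_on with
  | empty =>
    simp only [Finset.inf_empty]
    exact .const ⊤
  | @insert a s ha ih =>
    simp only [Finset.inf_insert]
    exact .inf (hg a (Finset.mem_insert_self a s))
      (ih fun i hi => hg i (Finset.mem_insert_of_mem hi))

lemma stepA {f : (Fin n → L) → L} (hf : Monotone f) (hsup : DiagSubstPreservesSup f)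
    (hH : CondH f) (S : Finset (Fin n)) (x : Fin n → L) :
    (f fun i => if i ∈ S then (⊤ : L) else ⊥) ⊓ S.inf x ≤ f x := by
  have h01 : f (fun _ : Fin n => (⊥ : L)) ≤ f (fun _ : Fin n => (⊤ : L)) := hf fun i => bot_le
  set c₁ := f (fun _ : Fin n => (⊤ : L)) with hc₁
  set c₀ := f (fun _ : Fin n => (⊥ : L)) with hc₀
  set m := S.inf x with hm
  have hH1 := hH (fun i => if i ∈ S then (⊤ : L) else ⊥) (m ⊓ c₁ ⊔ c₀)
    le_sup_right (sup_le inf_le_right h01)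
  have e1 : (fun i => (if i ∈ S then (⊤ : L) else ⊥) ⊓ (m ⊓ c₁ ⊔ c₀))
      = (fun i => if i ∉ S then (⊥ : L) else m ⊓ c₁ ⊔ c₀) := by
    funext i; by_cases hi : i ∈ S
    · rw [if_pos hi, if_neg (not_not_intro hi), top_inf_eq]
    · rw [if_neg hi, if_pos hi, bot_inf_eq]
  rw [e1] at hH1
  have hd := hsup {i | i ∉ S} (fun _ => (⊥ : L)) (m ⊓ c₁) c₀
  simp only [Set.mem_setOf_eq] at hd
  have b1 : (f fun i => if i ∉ S then (⊥ : L) else m ⊓ c₁) ≤ f x := by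
    refine hf fun i => ?_
    by_cases hi : i ∈ S
    · rw [if_neg (not_not_intro hi)]
      exact inf_le_left.trans (Finset.inf_le hi)
    · rw [if_pos hi]; exact bot_le
  have b2 : (f fun i => if i ∉ S then (⊥ : L) else c₀) ≤ f x := by
    have hH2 := hH (fun i => if i ∈ S then (⊤ : L) else ⊥) c₀ le_rfl h01
    have e2 : (fun i => (if i ∈ S then (⊤ : L) else ⊥) ⊓ c₀)
        = (fun i => if i ∉ S then (⊥ : L) else c₀) := by
      funext i; by_cases hi : i ∈ S
      · rw [if_pos hi, if_neg (not_not_intro hi), top_inf_eq]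
      · rw [if_neg hi, if_pos hi, bot_inf_eq]
    rw [e2] at hH2
    rw [hH2]
    exact inf_le_right.trans (hf fun i => bot_le)
  calc (f fun i => if i ∈ S then (⊤ : L) else ⊥) ⊓ m
      ≤ (f fun i => if i ∈ S then (⊤ : L) else ⊥) ⊓ (m ⊓ c₁ ⊔ c₀) := by
        refine le_inf inf_le_left (le_sup_of_le_left (le_inf inf_le_right ?_))
        exact inf_le_left.trans (hf fun i => le_top)
    _ = f (fun i => if i ∉ S then (⊥ : L) else m ⊓ c₁ ⊔ c₀) := hH1.symm
    _ ≤ f x := by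
        have key : (f fun i => if i ∉ S then (⊥ : L) else m ⊓ c₁ ⊔ c₀)
            = (f fun i => if i ∉ S then (⊥ : L) else m ⊓ c₁)
              ⊔ (f fun i => if i ∉ S then (⊥ : L) else c₀) := by
          refine Eq.trans (congrArg f (funext fun i => ?_)) (Eq.trans hd
            (congrArg₂ (· ⊔ ·) (congrArg f (funext fun i => ?_))
              (congrArg f (funext fun i => ?_)))) <;>
            by_cases hi : i ∈ S <;> simp [hi]
        rw [key]
        exact sup_le b1 b2

lemma stepB {f : (Fin n → L) → L} (hf : Monotone f) (hH : CondH f) (hV : CondV f) :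
    ∀ (N : ℕ) (x : Fin n → L), (Finset.univ.filter fun i => x i ≠ ⊥).card ≤ N →
      f x ≤ Finset.univ.sup (fun S : Finset (Fin n) =>
        (f fun i => if i ∈ S then (⊤ : L) else ⊥) ⊓ S.inf x) := by
  have h01 : f (fun _ : Fin n => (⊥ : L)) ≤ f (fun _ : Fin n => (⊤ : L)) := hf fun i => bot_le
  have hempty : ∀ x : Fin n → L, (∀ i, x i = ⊥) →
      f x ≤ Finset.univ.sup (fun S : Finset (Fin n) =>
        (f fun i => if i ∈ S then (⊤ : L) else ⊥) ⊓ S.inf x) := by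
    intro x hx
    refine le_trans (le_of_eq ?_) (by apply Finset.le_sup (Finset.mem_univ (∅ : Finset (Fin n))))
    rw [Finset.inf_empty, inf_top_eq]
    congr 1
    funext i
    simp [hx i]
  intro N
  induction N with
  | zero =>
    intro x hx
    refine hempty x fun i => ?_
    by_contra hne
    have hmem : i ∈ Finset.univ.filter fun i => x i ≠ ⊥ :=
      Finset.mem_filter.mpr ⟨Finset.mem_univ i, hne⟩
    rw [Nat.le_zero, Finset.card_eq_zero] at hx
    rw [hx] at hmem
    exact absurd hmem (Finset.notMem_empty i)
  | succ N ih =>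
    intro x hx
    by_cases hTne : (Finset.univ.filter fun i => x i ≠ ⊥).Nonempty
    case neg =>
      refine hempty x fun i => ?_
      by_contra hne
      exact hTne ⟨i, Finset.mem_filter.mpr ⟨Finset.mem_univ i, hne⟩⟩
    case pos =>
      set c₁ := f (fun _ : Fin n => (⊤ : L)) with hc₁
      set c₀ := f (fun _ : Fin n => (⊥ : L)) with hc₀
      set T := Finset.univ.filter fun i => x i ≠ ⊥ with hT
      have main : ∀ x' : Fin n → L, (∀ i, x' i ≤ x i) → (∀ i, x' i ≤ c₁) →
          f x' ≤ Finset.univ.sup (fun S : Finset (Fin n) =>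
            (f fun i => if i ∈ S then (⊤ : L) else ⊥) ⊓ S.inf x) := by
        intro x' h1 h2
        have hx'bot : ∀ i, i ∉ T → x' i = ⊥ := by
          intro i hi
          have hxi : x i = ⊥ := by
            by_contra hne
            exact hi (Finset.mem_filter.mpr ⟨Finset.mem_univ i, hne⟩)
          exact le_bot_iff.mp ((h1 i).trans (le_of_eq hxi))
        have base : ∀ D : Finset (Fin n), T ⊆ D →
            f (fun i => x' i ⊓ (D.inf x' ⊔ c₀)) ≤ Finset.univ.sup
              (fun S : Finset (Fin n) =>
                (f fun i => if i ∈ S then (⊤ : L) else ⊥) ⊓ S.inf x) := by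
          intro D hTD
          have hm'c1 : T.inf x' ≤ c₁ := by
            obtain ⟨j, hj⟩ := hTne
            exact (Finset.inf_le hj).trans (h2 j)
          have hHw := hH (fun i => if i ∈ T then (⊤ : L) else ⊥) (T.inf x' ⊔ c₀)
            le_sup_right (sup_le hm'c1 h01)
          have hle : f (fun i => x' i ⊓ (D.inf x' ⊔ c₀))
              ≤ f (fun i => (if i ∈ T then (⊤ : L) else ⊥) ⊓ (T.inf x' ⊔ c₀)) := by
            refine hf fun i => ?_
            by_cases hi : i ∈ T
            · rw [if_pos hi, top_inf_eq]
              exact inf_le_right.trans (sup_le_sup_right (Finset.inf_mono hTD) c₀)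
            · rw [if_neg hi, bot_inf_eq]
              rw [hx'bot i hi, bot_inf_eq]
          refine hle.trans ?_
          rw [hHw, inf_sup_left]
          refine sup_le ?_ ?_
          · refine le_trans ?_ (by apply Finset.le_sup (Finset.mem_univ T))
            exact inf_le_inf_left _ ((Finset.inf_mono_fun fun i _ => h1 i))
          · refine le_trans inf_le_right ?_
            refine le_trans (le_of_eq ?_)
              (by apply Finset.le_sup (Finset.mem_univ (∅ : Finset (Fin n))))
            rw [Finset.inf_empty, inf_top_eq, hc₀]
            exact congrArg f (funext fun i => by simp)
        have inner : ∀ (M : ℕ) (D : Finset (Fin n)), (T \ D).card ≤ M →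
            f (fun i => x' i ⊓ (D.inf x' ⊔ c₀)) ≤ Finset.univ.sup
              (fun S : Finset (Fin n) =>
                (f fun i => if i ∈ S then (⊤ : L) else ⊥) ⊓ S.inf x) := by
          intro M
          induction M with
          | zero =>
            intro D hD
            rw [Nat.le_zero, Finset.card_eq_zero, Finset.sdiff_eq_empty_iff_subset] at hD
            exact base D hD
          | succ M ihM =>
            intro D hD
            by_cases hTD : T ⊆ D
            · exact base D hTD
            · obtain ⟨j, hjT, hjD⟩ : ∃ j, j ∈ T ∧ j ∉ D := by
                by_contra hcon
                push_neg at hcon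
                exact hTD fun i hi => hcon i hi
              have hVz := hV (fun i => x' i ⊓ (D.inf x' ⊔ c₀))
                (x' j ⊓ (D.inf x' ⊔ c₀) ⊔ c₀) le_sup_right
                (sup_le (inf_le_left.trans (h2 j)) h01)
              have eA : (fun i => x' i ⊓ (D.inf x' ⊔ c₀) ⊓ (x' j ⊓ (D.inf x' ⊔ c₀) ⊔ c₀))
                  = (fun i => x' i ⊓ ((insert j D).inf x' ⊔ c₀)) := by
                funext i
                rw [Finset.inf_insert]
                exact auxId (x' i) (x' j) (D.inf x') c₀
              rw [eA] at hVz
              rw [hVz]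
              refine sup_le ?_ ?_
              · refine ihM (insert j D) ?_
                rw [Finset.sdiff_insert, Finset.card_erase_of_mem
                  (Finset.mem_sdiff.mpr ⟨hjT, hjD⟩)]
                omega
              · -- the bracket part
                have hBx : ∀ i, (if x' i ⊓ (D.inf x' ⊔ c₀) ≤ x' j ⊓ (D.inf x' ⊔ c₀) ⊔ c₀
                    then (⊥ : L) else x' i ⊓ (D.inf x' ⊔ c₀)) ≤ x i := by
                  intro i
                  by_cases hle : x' i ⊓ (D.inf x' ⊔ c₀) ≤ x' j ⊓ (D.inf x' ⊔ c₀) ⊔ c₀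
                  · rw [if_pos hle]; exact bot_le
                  · rw [if_neg hle]; exact inf_le_left.trans (h1 i)
                have hcard : (Finset.univ.filter fun i =>
                    (if x' i ⊓ (D.inf x' ⊔ c₀) ≤ x' j ⊓ (D.inf x' ⊔ c₀) ⊔ c₀
                      then (⊥ : L) else x' i ⊓ (D.inf x' ⊔ c₀)) ≠ ⊥).card ≤ N := by
                  have hsub : (Finset.univ.filter fun i =>
                      (if x' i ⊓ (D.inf x' ⊔ c₀) ≤ x' j ⊓ (D.inf x' ⊔ c₀) ⊔ c₀
                        then (⊥ : L) else x' i ⊓ (D.inf x' ⊔ c₀)) ≠ ⊥) ⊆ T.erase j := by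
                    intro i hi
                    rw [Finset.mem_filter] at hi
                    by_cases hle : x' i ⊓ (D.inf x' ⊔ c₀) ≤ x' j ⊓ (D.inf x' ⊔ c₀) ⊔ c₀
                    · rw [if_pos hle] at hi
                      exact absurd rfl hi.2
                    · have hij : i ≠ j := by
                        intro h'
                        exact hle (h' ▸ le_sup_left)
                      have hiT : i ∈ T := by
                        by_contra hiT
                        exact hle (le_trans (inf_le_left.trans
                          (le_of_eq (hx'bot i hiT))) bot_le)
                      exact Finset.mem_erase.mpr ⟨hij, hiT⟩
                  refine le_trans (Finset.card_le_card hsub) ?_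
                  rw [Finset.card_erase_of_mem hjT]
                  have hTcard : T.card ≤ N + 1 := hx
                  omega
                refine le_trans (ih _ hcard) ?_
                refine Finset.sup_le fun S _ => ?_
                refine le_trans (inf_le_inf_left _
                  (Finset.inf_mono_fun fun i _ => hBx i)) ?_
                apply Finset.le_sup (Finset.mem_univ S)
        have := inner T.card ∅ (by rw [Finset.sdiff_empty])
        have e0 : (fun i => x' i ⊓ ((∅ : Finset (Fin n)).inf x' ⊔ c₀)) = x' := by
          funext i
          rw [Finset.inf_empty, top_sup_eq, inf_top_eq]
        rw [e0] at this
        exact this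
      have hfx : f (fun i => x i ⊓ c₁) = f x := by
        have h' := hH x c₁ h01 le_rfl
        rw [h', inf_eq_left.mpr (hf fun i => le_top)]
      calc f x = f (fun i => x i ⊓ c₁) := hfx.symm
        _ ≤ _ := main (fun i => x i ⊓ c₁) (fun i => inf_le_left) (fun i => inf_le_right)

end Aux
/-- An order-preserving function `f : Lⁿ → L` (`n ≥ 1`) is a lattice
polynomial function iff for every function `g` obtained from `f` by substituting
constants for variables (including `f` itself), `δ_g` preserves `∨`, and `f`
satisfies conditions (H) and (V). -/
theorem isLatticePolynomial_iff_diagSup_condH_condV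
    {L : Type*} [DistribLattice L] [BoundedOrder L] {n : ℕ} (hn : 1 ≤ n)
    (f : (Fin n → L) → L) (hf : Monotone f) :
    IsLatticePolynomial f ↔ DiagSubstPreservesSup f ∧ CondH f ∧ CondV f := by
  constructor
  · intro h
    have hHf : CondH f := condH_of_poly h
    refine ⟨?_, hHf, ?_⟩
    · intro K a x y
      obtain ⟨p, q, -, hpq⟩ := unary_form h K a
      rw [hpq, hpq, hpq, inf_sup_right, sup_sup_distrib_left]
    · intro x c hc0 hc1
      have hA : (f fun i => x i ⊓ c) = f x ⊓ c := hHf x c hc0 hc1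
      rw [hA]
      apply le_antisymm
      · conv_lhs => rw [dnf_of_poly h x]
        refine Finset.sup_le fun S _ => ?_
        by_cases hS : ∀ i ∈ S, ¬ x i ≤ c
        · refine le_trans ?_ le_sup_right
          rw [dnf_of_poly h (fun i => if x i ≤ c then (⊥ : L) else x i)]
          refine le_trans (le_of_eq ?_) (by apply Finset.le_sup (Finset.mem_univ S))
          congr 1
          exact Finset.inf_congr rfl fun i hi => (if_neg (hS i hi)).symm
        · push_neg at hS
          obtain ⟨i0, hi0S, hi0⟩ := hS
          refine le_trans ?_ le_sup_left
          refine le_inf ?_ (inf_le_right.trans ((Finset.inf_le hi0S).trans hi0))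
          refine le_trans (by apply Finset.le_sup (Finset.mem_univ S))
            (le_of_eq (dnf_of_poly h x).symm)
      · refine sup_le inf_le_left (h.mono fun i => ?_)
        by_cases hi : x i ≤ c
        · rw [if_pos hi]; exact bot_le
        · rw [if_neg hi]
  · rintro ⟨hsup, hH, hV⟩
    have hFeq : f = fun x : Fin n → L => Finset.univ.sup
        (fun S : Finset (Fin n) => (f fun i => if i ∈ S then (⊤ : L) else ⊥) ⊓ S.inf x) := by
      funext x
      apply le_antisymm
      · exact stepB hf hH hV (Finset.univ.filter fun i => x i ≠ ⊥).card x le_rfl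
      · exact Finset.sup_le fun S _ => stepA hf hsup hH S x
    have hpoly : IsLatticePolynomial (fun x : Fin n → L => Finset.univ.sup
        (fun S : Finset (Fin n) => (f fun i => if i ∈ S then (⊤ : L) else ⊥) ⊓ S.inf x)) := by
      apply poly_finsetSup
      intro S _
      exact .inf (.const _) (poly_finsetInf S (fun i x => x i) (fun i _ => .proj i))
    exact hFeq.symm ▸ hpoly
end

section
/- Let L be a bounded distributive lattice and let f : Lⁿ → L be a lattice polynomial function. Then for every x ∈ Lⁿ, f(x) = ⋁_{I ⊆ {1,…,n}} ( f(e_I) ∧ ⋀_{i ∈ I} x_i ), where the empty meet is taken to be the top element 1; that is, the map α_f : 2^{[n]} → L, I ↦ f(e_I), belongs to DNF(f). -/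
open Classical

variable {L : Type*}

private lemma poly_mono' {L : Type*} [DistribLattice L] [BoundedOrder L] {n : ℕ}
    {f : (Fin n → L) → L} (hf : IsLatticePolynomial f) : Monotone f := by
  induction hf with
  | proj k => exact fun a b h => h k
  | const c => exact monotone_const
  | inf _ _ ihf ihg => exact fun a b h => inf_le_inf (ihf h) (ihg h)
  | sup _ _ ihf ihg => exact fun a b h => sup_le_sup (ihf h) (ihg h)

/-- Goodstein: Every lattice polynomial function has the disjunctive
normal form representation `f(x) = ⋁_{I ⊆ [n]} (f(e_I) ∧ ⋀_{i ∈ I} x_i)`. -/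
theorem polynomial_eq_DNF
    {L : Type*} [DistribLattice L] [BoundedOrder L] {n : ℕ}
    (f : (Fin n → L) → L) (hf : IsLatticePolynomial f) :
    ∀ x : Fin n → L,
      f x = (Finset.univ : Finset (Finset (Fin n))).sup
        (fun I => f (fun i => if i ∈ I then (⊤ : L) else ⊥) ⊓ I.inf x) := by
  induction hf with
  | proj k =>
    intro x
    apply le_antisymm
    · have h := Finset.le_sup (f := fun I : Finset (Fin n) =>
        (if k ∈ I then (⊤ : L) else ⊥) ⊓ I.inf x) (Finset.mem_univ ({k} : Finset (Fin n)))
      simpa using h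
    · refine Finset.sup_le fun I _ => ?_
      by_cases hk : k ∈ I
      · simp only [hk, if_pos]
        exact le_trans inf_le_right (Finset.inf_le hk)
      · simp [hk]
  | const c =>
    intro x
    apply le_antisymm
    · have h := Finset.le_sup (f := fun I : Finset (Fin n) => (c : L) ⊓ I.inf x)
        (Finset.mem_univ (∅ : Finset (Fin n)))
      simpa using h
    · exact Finset.sup_le fun I _ => inf_le_left
  | @sup p q hp hq ihp ihq =>
    intro x
    beta_reduce
    rw [ihp x, ihq x]
    apply le_antisymm
    · apply sup_le
      · refine Finset.sup_le fun I _ => le_trans (inf_le_inf le_sup_left le_rfl)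
          (Finset.le_sup (f := fun I : Finset (Fin n) =>
            (p (fun i => if i ∈ I then (⊤ : L) else ⊥) ⊔
             q (fun i => if i ∈ I then (⊤ : L) else ⊥)) ⊓ I.inf x) (Finset.mem_univ I))
      · refine Finset.sup_le fun I _ => le_trans (inf_le_inf le_sup_right le_rfl)
          (Finset.le_sup (f := fun I : Finset (Fin n) =>
            (p (fun i => if i ∈ I then (⊤ : L) else ⊥) ⊔
             q (fun i => if i ∈ I then (⊤ : L) else ⊥)) ⊓ I.inf x) (Finset.mem_univ I))
    · refine Finset.sup_le fun I _ => ?_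
      rw [inf_sup_right]
      exact sup_le_sup
        (Finset.le_sup (f := fun I : Finset (Fin n) =>
          p (fun i => if i ∈ I then (⊤ : L) else ⊥) ⊓ I.inf x) (Finset.mem_univ I))
        (Finset.le_sup (f := fun I : Finset (Fin n) =>
          q (fun i => if i ∈ I then (⊤ : L) else ⊥) ⊓ I.inf x) (Finset.mem_univ I))
  | @inf p q hp hq ihp ihq =>
    intro x
    beta_reduce
    rw [ihp x, ihq x]
    have hpm := poly_mono' hp
    have hqm := poly_mono' hq
    apply le_antisymm
    · rw [Finset.sup_inf_distrib_right]
      refine Finset.sup_le fun I _ => ?_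
      rw [Finset.sup_inf_distrib_left]
      refine Finset.sup_le fun J _ => ?_
      refine le_trans ?_ (Finset.le_sup (f := fun I : Finset (Fin n) =>
        (p (fun i => if i ∈ I then (⊤ : L) else ⊥) ⊓
         q (fun i => if i ∈ I then (⊤ : L) else ⊥)) ⊓ I.inf x)
        (Finset.mem_univ (I ∪ J)))
      have he : ∀ (h : (Fin n → L) → L), Monotone h → ∀ K : Finset (Fin n), K ⊆ I ∪ J →
          h (fun i => if i ∈ K then (⊤ : L) else ⊥) ≤
          h (fun i => if i ∈ I ∪ J then (⊤ : L) else ⊥) := by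
        intro h hm K hK
        refine hm fun i => ?_
        by_cases hi : i ∈ K
        · simp [hi, hK hi]
        · simp [hi]
      refine le_inf (le_inf ?_ ?_) ?_
      · exact le_trans (inf_le_left.trans inf_le_left)
          (he p hpm I Finset.subset_union_left)
      · exact le_trans (inf_le_right.trans inf_le_left)
          (he q hqm J Finset.subset_union_right)
      · rw [Finset.inf_union]
        exact inf_le_inf inf_le_right inf_le_right
    · refine Finset.sup_le fun I _ => le_inf ?_ ?_
      · exact le_trans (inf_le_inf inf_le_left le_rfl)
          (Finset.le_sup (f := fun I : Finset (Fin n) =>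
            p (fun i => if i ∈ I then (⊤ : L) else ⊥) ⊓ I.inf x) (Finset.mem_univ I))
      · exact le_trans (inf_le_inf inf_le_right le_rfl)
          (Finset.le_sup (f := fun I : Finset (Fin n) =>
            q (fun i => if i ∈ I then (⊤ : L) else ⊥) ⊓ I.inf x) (Finset.mem_univ I))
end

section
/- Let L be a bounded distributive lattice, f : Lⁿ → L a lattice polynomial function, and α : 2^{[n]} → L any mapping. Then α ∈ DNF(f) if and only if ⋁_{J ⊆ I} α(J) = f(e_I) for every I ⊆ {1,…,n}. -/
open Classical

variable {L : Type*}

section Aux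

variable [DistribLattice L] [BoundedOrder L] {n : ℕ}

lemma lp_mono {f : (Fin n → L) → L} (hf : IsLatticePolynomial f) : Monotone f := by
  induction hf with
  | proj k => exact fun x y h => h k
  | const c => exact monotone_const
  | inf hf hg ihf ihg => exact fun x y h => inf_le_inf (ihf h) (ihg h)
  | sup hf hg ihf ihg => exact fun x y h => sup_le_sup (ihf h) (ihg h)

lemma charFn_inf (I J : Finset (Fin n)) :
    J.inf (fun i => if i ∈ I then (⊤ : L) else ⊥) = if J ⊆ I then ⊤ else ⊥ := by
  split_ifs with h
  · rw [Finset.inf_eq_top_iff]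
    intro i hi
    simp [h hi]
  · obtain ⟨j, hjJ, hjI⟩ := Finset.not_subset.mp h
    refine le_bot_iff.mp ?_
    calc J.inf (fun i => if i ∈ I then (⊤ : L) else ⊥) ≤ _ := Finset.inf_le hjJ
    _ = ⊥ := if_neg hjI

lemma lp_dnf {f : (Fin n → L) → L} (hf : IsLatticePolynomial f) (x : Fin n → L) :
    f x = (Finset.univ : Finset (Finset (Fin n))).sup
      (fun I => f (fun i => if i ∈ I then ⊤ else ⊥) ⊓ I.inf x) := by
  induction hf with
  | proj k =>
    refine le_antisymm ?_ ?_
    · refine le_trans ?_ (Finset.le_sup (Finset.mem_univ ({k} : Finset (Fin n))))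
      simp
    · refine Finset.sup_le fun I _ => ?_
      by_cases hk : k ∈ I
      · simp only [if_pos hk, top_inf_eq]
        exact Finset.inf_le hk
      · simp [if_neg hk]
  | const c =>
    refine le_antisymm ?_ (Finset.sup_le fun I _ => inf_le_left)
    refine le_trans ?_ (Finset.le_sup (Finset.mem_univ (∅ : Finset (Fin n))))
    simp
  | @inf p q hp hq ihp ihq =>
    dsimp only
    refine le_antisymm ?_ ?_
    · rw [ihp, ihq, Finset.sup_inf_sup]
      refine Finset.sup_le fun IJ _ => ?_
      obtain ⟨I, J⟩ := IJ
      refine le_trans ?_ (Finset.le_sup (Finset.mem_univ (I ∪ J)))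
      have h1 : (fun i => if i ∈ I then (⊤ : L) else ⊥) ≤
          fun i => if i ∈ I ∪ J then (⊤ : L) else ⊥ := by
        intro i; by_cases h : i ∈ I <;> simp [h, Finset.mem_union]
      have h2 : (fun i => if i ∈ J then (⊤ : L) else ⊥) ≤
          fun i => if i ∈ I ∪ J then (⊤ : L) else ⊥ := by
        intro i; by_cases h : i ∈ J <;> simp [h, Finset.mem_union]
      dsimp only
      rw [Finset.inf_union]
      exact le_inf (le_inf (inf_le_left.trans (inf_le_left.trans (lp_mono hp h1)))
          (inf_le_right.trans (inf_le_left.trans (lp_mono hq h2))))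
        (inf_le_inf inf_le_right inf_le_right)
    · refine Finset.sup_le fun K _ => ?_
      rw [ihp, ihq]
      refine le_inf (le_trans ?_ (Finset.le_sup (Finset.mem_univ K)))
        (le_trans ?_ (Finset.le_sup (Finset.mem_univ K)))
      · exact inf_le_inf_right _ inf_le_left
      · exact inf_le_inf_right _ inf_le_right
  | @sup p q hp hq ihp ihq =>
    dsimp only
    rw [ihp, ihq]
    refine le_antisymm ?_ ?_
    · refine sup_le (Finset.sup_le fun K _ => ?_) (Finset.sup_le fun K _ => ?_) <;>
      · refine le_trans ?_ (Finset.le_sup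
          (f := fun I => ((p fun i => if i ∈ I then (⊤ : L) else ⊥) ⊔
            q fun i => if i ∈ I then ⊤ else ⊥) ⊓ I.inf x) (Finset.mem_univ K))
        first
        | exact inf_le_inf_right _ le_sup_left
        | exact inf_le_inf_right _ le_sup_right
    · refine Finset.sup_le fun K _ => ?_
      rw [inf_sup_right]
      refine sup_le (le_trans ?_ le_sup_left) (le_trans ?_ le_sup_right)
      · exact Finset.le_sup (f := fun I => (p fun i => if i ∈ I then (⊤ : L) else ⊥) ⊓ I.inf x)
          (Finset.mem_univ K)
      · exact Finset.le_sup (f := fun I => (q fun i => if i ∈ I then (⊤ : L) else ⊥) ⊓ I.inf x)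
          (Finset.mem_univ K)

end Aux

/-- For a lattice polynomial function `f` and a mapping
`α : 2^{[n]} → L`, `α ∈ DNF(f)` iff `⋁_{J ⊆ I} α(J) = f(e_I)` for every `I ⊆ [n]`. -/
theorem mem_DNF_iff
    {L : Type*} [DistribLattice L] [BoundedOrder L] {n : ℕ}
    (f : (Fin n → L) → L) (hf : IsLatticePolynomial f)
    (α : Finset (Fin n) → L) :
    (∀ x : Fin n → L,
        f x = (Finset.univ : Finset (Finset (Fin n))).sup (fun I => α I ⊓ I.inf x)) ↔
      (∀ I : Finset (Fin n),
        I.powerset.sup α = f (fun i => if i ∈ I then (⊤ : L) else ⊥)) := by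
  constructor
  · intro hα I
    rw [hα]
    refine le_antisymm ?_ ?_
    · refine Finset.sup_le fun J hJ => ?_
      refine le_trans ?_ (Finset.le_sup (Finset.mem_univ J))
      rw [charFn_inf, if_pos (Finset.mem_powerset.mp hJ)]
      simp
    · refine Finset.sup_le fun J _ => ?_
      rw [charFn_inf]
      split_ifs with h
      · simpa using Finset.le_sup (f := α) (Finset.mem_powerset.mpr h)
      · simp
  · intro hα x
    rw [lp_dnf hf x]
    refine le_antisymm ?_ ?_
    · refine Finset.sup_le fun I _ => ?_
      rw [← hα I, Finset.sup_inf_distrib_right]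
      refine Finset.sup_le fun J hJ => ?_
      have h2 : I.inf x ≤ J.inf x :=
        Finset.inf_mono (Finset.mem_powerset.mp hJ)
      exact (inf_le_inf_left _ h2).trans
        (Finset.le_sup (f := fun K => α K ⊓ K.inf x) (Finset.mem_univ J))
    · refine Finset.sup_le fun I _ => ?_
      have h1 : α I ≤ I.powerset.sup α :=
        Finset.le_sup (Finset.mem_powerset.mpr le_rfl)
      rw [hα I] at h1
      exact (inf_le_inf_right _ h1).trans
        (Finset.le_sup (f := fun K => f (fun i => if i ∈ K then (⊤ : L) else ⊥) ⊓ K.inf x)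
          (Finset.mem_univ I))
end

section
/- Let L be a bounded distributive lattice. Every lattice polynomial function f : Lⁿ → L satisfies condition (H) and its dual condition (H*). -/
open Classical

variable {L : Type*}

section Aux

variable [DistribLattice L] [BoundedOrder L]

lemma key_inf (a b a0 b0 c : L) (ha : a0 ≤ a) (hb : b0 ≤ b) :
    ((a ⊓ c) ⊔ a0) ⊓ ((b ⊓ c) ⊔ b0) = (a ⊓ b ⊓ c) ⊔ (a0 ⊓ b0) := by
  have h1 : (a ⊓ c) ⊔ a0 = a ⊓ (c ⊔ a0) := by
    rw [sup_inf_right, sup_eq_left.mpr ha]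
  have h2 : (b ⊓ c) ⊔ b0 = b ⊓ (c ⊔ b0) := by
    rw [sup_inf_right, sup_eq_left.mpr hb]
  rw [h1, h2]
  have h3 : a ⊓ (c ⊔ a0) ⊓ (b ⊓ (c ⊔ b0)) = (a ⊓ b) ⊓ ((c ⊔ a0) ⊓ (c ⊔ b0)) := by
    ac_rfl
  rw [h3, ← sup_inf_left, inf_sup_left, inf_assoc]
  congr 1
  exact inf_eq_right.mpr (le_inf (le_trans inf_le_left ha) (le_trans inf_le_right hb))

lemma key_sup (a b a0 b0 c : L) (ha : a ≤ a0) (hb : b ≤ b0) :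
    ((a ⊔ c) ⊓ a0) ⊔ ((b ⊔ c) ⊓ b0) = (a ⊔ b ⊔ c) ⊓ (a0 ⊔ b0) := by
  have h1 : (a ⊔ c) ⊓ a0 = a ⊔ (c ⊓ a0) := by
    rw [inf_sup_right, inf_eq_left.mpr ha]
  have h2 : (b ⊔ c) ⊓ b0 = b ⊔ (c ⊓ b0) := by
    rw [inf_sup_right, inf_eq_left.mpr hb]
  rw [h1, h2]
  have h3 : a ⊔ (c ⊓ a0) ⊔ (b ⊔ (c ⊓ b0)) = (a ⊔ b) ⊔ ((c ⊓ a0) ⊔ (c ⊓ b0)) := by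
    ac_rfl
  rw [h3, ← inf_sup_left, sup_inf_left, sup_assoc]
  congr 1
  exact sup_eq_right.mpr (sup_le (le_trans ha le_sup_left) (le_trans hb le_sup_right))

lemma poly_mono {n : ℕ} {f : (Fin n → L) → L} (hf : IsLatticePolynomial f)
    {x y : Fin n → L} (hxy : ∀ i, x i ≤ y i) : f x ≤ f y := by
  induction hf with
  | proj k => exact hxy k
  | const c => exact le_rfl
  | inf hf hg ihf ihg => exact inf_le_inf ihf ihg
  | sup hf hg ihf ihg => exact sup_le_sup ihf ihg

lemma poly_inf_eq {n : ℕ} {f : (Fin n → L) → L} (hf : IsLatticePolynomial f)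
    (x : Fin n → L) (c : L) :
    (f fun i => x i ⊓ c) = (f x ⊓ c) ⊔ f (fun _ => ⊥) := by
  induction hf with
  | proj k => simp
  | const d => simp
  | @inf f g hf hg ihf ihg =>
    simp only [ihf, ihg]
    exact key_inf _ _ _ _ _ (poly_mono hf fun i => bot_le)
      (poly_mono hg fun i => bot_le)
  | @sup f g hf hg ihf ihg =>
    simp only [ihf, ihg]
    rw [sup_sup_sup_comm, ← inf_sup_right]

lemma poly_sup_eq {n : ℕ} {f : (Fin n → L) → L} (hf : IsLatticePolynomial f)
    (x : Fin n → L) (c : L) :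
    (f fun i => x i ⊔ c) = (f x ⊔ c) ⊓ f (fun _ => ⊤) := by
  induction hf with
  | proj k => simp
  | const d => simp
  | @sup f g hf hg ihf ihg =>
    simp only [ihf, ihg]
    exact key_sup _ _ _ _ _ (poly_mono hf fun i => le_top)
      (poly_mono hg fun i => le_top)
  | @inf f g hf hg ihf ihg =>
    simp only [ihf, ihg]
    rw [inf_inf_inf_comm, ← sup_inf_right]

end Aux

/-- Every lattice polynomial function satisfies condition (H) and its
dual (H*). -/
theorem polynomial_condH_condHDual
    {L : Type*} [DistribLattice L] [BoundedOrder L] {n : ℕ}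
    (f : (Fin n → L) → L) (hf : IsLatticePolynomial f) :
    CondH f ∧ CondHDual f := by
  constructor
  · intro x c h0 _
    rw [poly_inf_eq hf, sup_eq_left.mpr
      (le_inf (poly_mono hf fun i => bot_le) h0)]
  · intro x c _ h1
    rw [poly_sup_eq hf, inf_eq_left.mpr
      (sup_le (poly_mono hf fun i => le_top) h1)]
end

section
/- Let L be a bounded distributive lattice and let f : Lⁿ → L be an order-preserving function. If f satisfies condition (H) or its dual condition (H*), then f satisfies condition (I); moreover, in that case the range {f(x) : x ∈ Lⁿ} coincides with the interval [f(0̄), f(1̄)] and in particular is convex. -/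
open Classical

variable {L : Type*}

/-- An order-preserving function satisfying (H) or (H*) satisfies (I),
and its range coincides with the interval `[f(0̄), f(1̄)]`; in particular it is convex. -/
theorem condI_and_range_eq_Icc_of_condH_or_condHDual
    {L : Type*} [DistribLattice L] [BoundedOrder L] {n : ℕ}
    (f : (Fin n → L) → L) (hf : Monotone f)
    (h : CondH f ∨ CondHDual f) :
    CondI f ∧
      Set.range f = Set.Icc (f fun _ => ⊥) (f fun _ => ⊤) ∧
      IsConvexSubset (Set.range f) := by
  have hI : CondI f := by
    intro c h0 h1
    rcases h with hH | hH
    · have := hH (fun _ => ⊤) c h0 h1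
      simpa [inf_eq_right.mpr h1] using this
    · have := hH (fun _ => ⊥) c h0 h1
      simpa [sup_eq_right.mpr h0] using this
  have hR : Set.range f = Set.Icc (f fun _ => ⊥) (f fun _ => ⊤) := by
    ext c
    constructor
    · rintro ⟨x, rfl⟩
      exact ⟨hf (fun i => bot_le), hf (fun i => le_top)⟩
    · rintro ⟨h0, h1⟩
      exact ⟨fun _ => c, hI c h0 h1⟩
  refine ⟨hI, hR, ?_⟩
  intro a b c ha hc hab hbc
  rw [hR] at *
  exact ⟨le_trans ha.1 hab, le_trans hbc hc.2⟩
end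

section
/- Let L be a bounded distributive lattice and let f : Lⁿ → L be an order-preserving function. If f satisfies condition (H) and its dual condition (H*), then the diagonal δ_f preserves ∧ and ∨; in fact δ_f(x) = med(f(0̄), x, f(1̄)) for every x ∈ L. -/
open Classical

variable {L : Type*}

/-- If an order-preserving function satisfies (H) and (H*), then its
diagonal `δ_f` preserves `∧` and `∨`; in fact `δ_f(x) = med(f(0̄), x, f(1̄))`. -/
theorem diag_preserves_of_condH_condHDual
    {L : Type*} [DistribLattice L] [BoundedOrder L] {n : ℕ}
    (f : (Fin n → L) → L) (hf : Monotone f)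
    (hH : CondH f) (hHd : CondHDual f) :
    PreservesInf (fun x : L => f fun _ => x) ∧
      PreservesSup (fun x : L => f fun _ => x) ∧
      (∀ x : L, (f fun _ => x) = med (f fun _ => ⊥) x (f fun _ => ⊤)) := by
  set f0 := f (fun _ => ⊥) with hf0
  set f1 := f (fun _ => ⊤) with hf1
  have h01 : f0 ≤ f1 := hf (fun _ => bot_le)
  have key : ∀ x : L, (f fun _ => x) = f0 ⊔ (x ⊓ f1) := by
    intro x
    have h0x : f0 ≤ f fun _ => x := hf (fun _ => bot_le)
    have hx1 : (f fun _ => x) ≤ f1 := hf (fun _ => le_top)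
    set c := f0 ⊔ (x ⊓ f1) with hc
    have hc0 : f0 ≤ c := le_sup_left
    have hc1 : c ≤ f1 := sup_le h01 inf_le_right
    have e1 : (f fun _ : Fin n => x ⊔ f0) = (f fun _ => x) ⊔ f0 :=
      hHd (fun _ => x) f0 le_rfl h01
    have e3 : (f fun _ : Fin n => x ⊔ c) = (f fun _ => x) ⊔ c :=
      hHd (fun _ => x) c hc0 hc1
    have e4 : (f fun _ : Fin n => x ⊓ c) = (f fun _ => x) ⊓ c :=
      hH (fun _ => x) c hc0 hc1
    have hxc_sup : x ⊔ c = x ⊔ f0 := by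
      rw [hc, ← sup_assoc]
      exact sup_eq_left.mpr (inf_le_left.trans le_sup_left)
    have hxc_inf : x ⊓ c = x ⊓ f1 := by
      rw [hc, inf_sup_left, ← inf_assoc, inf_idem]
      exact sup_eq_right.mpr (inf_le_inf_left x h01)
    have le1 : c ≤ f fun _ => x := by
      have h2 : (f fun _ : Fin n => x ⊔ c) = f fun _ => x := by
        simp only [hxc_sup, e1, sup_eq_left.mpr h0x]
      rw [e3] at h2
      exact le_sup_right.trans h2.le
    have le2 : (f fun _ => x) ≤ c := by
      have h2 : (f fun _ : Fin n => x ⊓ c) = f fun _ => x := by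
        simp only [hxc_inf]
        have : (f fun _ : Fin n => x ⊓ f1) = (f fun _ => x) ⊓ f1 :=
          hH (fun _ => x) f1 h01 le_rfl
        rw [this, inf_eq_left.mpr hx1]
      rw [e4] at h2
      exact h2.ge.trans inf_le_right
    exact le_antisymm le2 le1
  refine ⟨?_, ?_, ?_⟩
  · intro x y
    simp only [key]
    rw [inf_inf_distrib_right, sup_inf_left]
  · intro x y
    simp only [key]
    rw [inf_sup_right, sup_sup_distrib_left]
  · intro x
    rw [key, med, sup_inf_left, sup_eq_right.mpr h01]
    exact (inf_eq_left.mpr ((inf_le_right : (f0 ⊔ x) ⊓ f1 ≤ f1).trans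
      (le_sup_right : f1 ≤ x ⊔ f1))).symm
end

section
/- Let L be a bounded distributive lattice and let f : Lⁿ → L be an order-preserving function. If f satisfies condition (H) and its dual condition (H*), then f satisfies condition (V) and its dual condition (V*); moreover, for every function g obtained from f by substituting constants for variables, the diagonal δ_g preserves ∧ and ∨. -/
open Classical

variable {L : Type*}

section AuxProofs

variable [DistribLattice L] [BoundedOrder L] {n : ℕ}

theorem aux_condV (f : (Fin n → L) → L) (hf : Monotone f)
    (hH : CondH f) (hHd : CondHDual f) : CondV f := by
  intro x c hc0 hc1
  set z : Fin n → L := fun i => if x i ≤ c then ⊥ else x i with hz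
  have hzx : z ≤ x := by
    intro i; by_cases h : x i ≤ c <;> simp [hz, h]
  have h1 : f x ≤ f z ⊔ c := by
    have hx : x ≤ fun i => z i ⊔ c := by
      intro i; by_cases h : x i ≤ c <;> simp [hz, h]
    calc f x ≤ f (fun i => z i ⊔ c) := hf hx
      _ = f z ⊔ c := hHd z c hc0 hc1
  have h2 := hH x c hc0 hc1
  apply le_antisymm
  · calc f x = f x ⊓ (f z ⊔ c) := (inf_eq_left.2 h1).symm
      _ = (f x ⊓ f z) ⊔ (f x ⊓ c) := inf_sup_left _ _ _
      _ ≤ (f fun i => x i ⊓ c) ⊔ f z := by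
          rw [h2]; exact sup_le (le_sup_of_le_right inf_le_right) le_sup_left
  · exact sup_le (hf fun i => inf_le_left) (hf hzx)

theorem aux_condVDual (f : (Fin n → L) → L) (hf : Monotone f)
    (hH : CondH f) (hHd : CondHDual f) : CondVDual f := by
  intro x c hc0 hc1
  set z : Fin n → L := fun i => if c ≤ x i then ⊤ else x i with hz
  have hzx : x ≤ z := by
    intro i; by_cases h : c ≤ x i <;> simp [hz, h]
  have h1 : f z ⊓ c ≤ f x := by
    have hx : (fun i => z i ⊓ c) ≤ x := by
      intro i; by_cases h : c ≤ x i <;> simp [hz, h, inf_le_left]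
    calc f z ⊓ c = f (fun i => z i ⊓ c) := (hH z c hc0 hc1).symm
      _ ≤ f x := hf hx
  have h2 := hHd x c hc0 hc1
  apply le_antisymm
  · exact le_inf (hf fun i => le_sup_left) (hf hzx)
  · calc (f fun i => x i ⊔ c) ⊓ f z = (f x ⊔ c) ⊓ f z := by rw [h2]
      _ = (f x ⊓ f z) ⊔ (c ⊓ f z) := inf_sup_right _ _ _
      _ ≤ f x := sup_le inf_le_left (by rw [inf_comm]; exact h1)

theorem aux_diag_inf (f : (Fin n → L) → L) (hf : Monotone f)
    (hH : CondH f) (hHd : CondHDual f)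
    (K : Set (Fin n)) (b : Fin n → L) (x y : L)
    (hx0 : f (fun _ => ⊥) ≤ x) (hx1 : x ≤ f (fun _ => ⊤)) :
    (f fun i => if i ∈ K then b i else x) ⊓ (f fun i => if i ∈ K then b i else y) ≤
      f fun i => if i ∈ K then b i else x ⊓ y := by
  have hA : (f fun i => if i ∈ K then b i else y) ⊓ x ≤
      f fun i => if i ∈ K then b i else x ⊓ y := by
    calc (f fun i => if i ∈ K then b i else y) ⊓ x
        = f (fun i => (if i ∈ K then b i else y) ⊓ x) :=
          (hH (fun i => if i ∈ K then b i else y) x hx0 hx1).symm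
      _ ≤ _ := by
          apply hf; intro i
          by_cases h : i ∈ K <;> simp [h, inf_le_left, inf_comm]
  have hB : (f fun i => if i ∈ K then b i else x) ≤
      (f fun i => if i ∈ K then b i else (⊥ : L)) ⊔ x := by
    rw [← hHd (fun i => if i ∈ K then b i else (⊥ : L)) x hx0 hx1]
    apply hf; intro i
    by_cases h : i ∈ K <;> simp [h]
  calc (f fun i => if i ∈ K then b i else x) ⊓ (f fun i => if i ∈ K then b i else y)
      ≤ ((f fun i => if i ∈ K then b i else (⊥ : L)) ⊔ x) ⊓
          (f fun i => if i ∈ K then b i else y) := inf_le_inf_right _ hB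
    _ = ((f fun i => if i ∈ K then b i else (⊥ : L)) ⊓ (f fun i => if i ∈ K then b i else y))
          ⊔ (x ⊓ (f fun i => if i ∈ K then b i else y)) := inf_sup_right _ _ _
    _ ≤ _ := by
        apply sup_le
        · exact le_trans inf_le_left (hf (by intro i; by_cases h : i ∈ K <;> simp [h]))
        · rw [inf_comm]; exact hA

theorem aux_diag_sup (f : (Fin n → L) → L) (hf : Monotone f)
    (hH : CondH f) (hHd : CondHDual f)
    (K : Set (Fin n)) (b : Fin n → L) (x y : L)
    (hx0 : f (fun _ => ⊥) ≤ x) (hx1 : x ≤ f (fun _ => ⊤)) :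
    (f fun i => if i ∈ K then b i else x ⊔ y) ≤
      (f fun i => if i ∈ K then b i else x) ⊔ (f fun i => if i ∈ K then b i else y) := by
  have hA : (f fun i => if i ∈ K then b i else x ⊔ y) ≤
      (f fun i => if i ∈ K then b i else y) ⊔ x := by
    rw [← hHd (fun i => if i ∈ K then b i else y) x hx0 hx1]
    apply hf; intro i
    by_cases h : i ∈ K <;> simp [h, le_sup_left, sup_comm]
  have hB : (f fun i => if i ∈ K then b i else (⊤ : L)) ⊓ x ≤
      f fun i => if i ∈ K then b i else x := by
    calc (f fun i => if i ∈ K then b i else (⊤ : L)) ⊓ x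
        = f (fun i => (if i ∈ K then b i else (⊤ : L)) ⊓ x) :=
          (hH (fun i => if i ∈ K then b i else (⊤ : L)) x hx0 hx1).symm
      _ ≤ _ := by
          apply hf; intro i
          by_cases h : i ∈ K <;> simp [h, inf_le_left]
  calc (f fun i => if i ∈ K then b i else x ⊔ y)
      ≤ (f fun i => if i ∈ K then b i else (⊤ : L)) ⊓
          ((f fun i => if i ∈ K then b i else y) ⊔ x) :=
        le_inf (hf (by intro i; by_cases h : i ∈ K <;> simp [h])) hA
    _ = ((f fun i => if i ∈ K then b i else (⊤ : L)) ⊓ (f fun i => if i ∈ K then b i else y))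
          ⊔ ((f fun i => if i ∈ K then b i else (⊤ : L)) ⊓ x) := inf_sup_left _ _ _
    _ ≤ _ := sup_le (le_sup_of_le_right inf_le_right) (le_sup_of_le_left hB)

theorem aux_reduce (f : (Fin n → L) → L) (hf : Monotone f)
    (hH : CondH f) (hHd : CondHDual f)
    (K : Set (Fin n)) (a : Fin n → L) (t : L) :
    (f fun i => if i ∈ K then a i else t) =
      f fun i => if i ∈ K then (a i ⊓ f (fun _ => ⊤)) ⊔ f (fun _ => ⊥)
        else (t ⊓ f (fun _ => ⊤)) ⊔ f (fun _ => ⊥) := by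
  have h01 : f (fun _ => ⊥) ≤ f (fun _ => ⊤) := hf fun i => bot_le
  have hv1 : f (fun i => (if i ∈ K then a i else t) ⊓ f (fun _ => ⊤)) =
      f (fun i => if i ∈ K then a i else t) := by
    rw [hH _ (f fun _ => ⊤) h01 le_rfl]
    exact inf_eq_left.2 (hf fun i => le_top)
  have hv2 := hHd (fun i => (if i ∈ K then a i else t) ⊓ f (fun _ => ⊤)) (f fun _ => ⊥)
    le_rfl h01
  rw [hv1, sup_eq_left.2 (hf fun i => bot_le : f (fun _ => ⊥) ≤ f (fun i => if i ∈ K then a i else t))] at hv2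
  rw [← hv2]
  congr 1
  funext i
  by_cases h : i ∈ K <;> simp [h]

theorem aux_med_inf (x y u v : L) :
    ((x ⊓ y) ⊓ v) ⊔ u = ((x ⊓ v) ⊔ u) ⊓ ((y ⊓ v) ⊔ u) := by
  symm
  calc ((x ⊓ v) ⊔ u) ⊓ ((y ⊓ v) ⊔ u) = (u ⊔ (x ⊓ v)) ⊓ (u ⊔ (y ⊓ v)) := by
        rw [sup_comm (x ⊓ v), sup_comm (y ⊓ v)]
    _ = u ⊔ ((x ⊓ v) ⊓ (y ⊓ v)) := (sup_inf_left _ _ _).symm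
    _ = u ⊔ ((x ⊓ y) ⊓ (v ⊓ v)) := by rw [inf_inf_inf_comm]
    _ = ((x ⊓ y) ⊓ v) ⊔ u := by rw [inf_idem, sup_comm]

theorem aux_med_sup (x y u v : L) :
    ((x ⊔ y) ⊓ v) ⊔ u = ((x ⊓ v) ⊔ u) ⊔ ((y ⊓ v) ⊔ u) := by
  rw [inf_sup_right, sup_sup_sup_comm, sup_idem]

end AuxProofs

/-- If an order-preserving function satisfies (H) and (H*), then it
satisfies (V) and (V*); moreover, for every function `g` obtained from `f` by
substituting constants for variables, the diagonal `δ_g` preserves `∧` and `∨`. -/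
theorem condV_condVDual_diag_of_condH_condHDual
    {L : Type*} [DistribLattice L] [BoundedOrder L] {n : ℕ}
    (f : (Fin n → L) → L) (hf : Monotone f)
    (hH : CondH f) (hHd : CondHDual f) :
    CondV f ∧ CondVDual f ∧ DiagSubstPreservesInf f ∧ DiagSubstPreservesSup f := by
  have h01 : f (fun _ => ⊥) ≤ f (fun _ => ⊤) := hf fun i => bot_le
  refine ⟨aux_condV f hf hH hHd, aux_condVDual f hf hH hHd, ?_, ?_⟩
  · intro K a x y
    rw [aux_reduce f hf hH hHd K a x, aux_reduce f hf hH hHd K a y,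
      aux_reduce f hf hH hHd K a (x ⊓ y)]
    set f0 := f (fun _ => ⊥)
    set f1 := f (fun _ => ⊤)
    have hm : ((x ⊓ y) ⊓ f1) ⊔ f0 = ((x ⊓ f1) ⊔ f0) ⊓ ((y ⊓ f1) ⊔ f0) := aux_med_inf x y f0 f1
    simp only [hm]
    apply le_antisymm
    · exact le_inf (hf fun i => by by_cases h : i ∈ K <;> simp [h, inf_le_left])
        (hf fun i => by by_cases h : i ∈ K <;> simp [h, inf_le_right])
    · exact aux_diag_inf f hf hH hHd K _ _ _ le_sup_right (sup_le inf_le_right h01)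
  · intro K a x y
    rw [aux_reduce f hf hH hHd K a x, aux_reduce f hf hH hHd K a y,
      aux_reduce f hf hH hHd K a (x ⊔ y)]
    set f0 := f (fun _ => ⊥)
    set f1 := f (fun _ => ⊤)
    have hm : ((x ⊔ y) ⊓ f1) ⊔ f0 = ((x ⊓ f1) ⊔ f0) ⊔ ((y ⊓ f1) ⊔ f0) := aux_med_sup x y f0 f1
    simp only [hm]
    apply le_antisymm
    · exact aux_diag_sup f hf hH hHd K _ _ _ le_sup_right (sup_le inf_le_right h01)
    · exact sup_le (hf fun i => by by_cases h : i ∈ K <;> simp [h, le_sup_left])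
        (hf fun i => by by_cases h : i ∈ K <;> simp [h, le_sup_right])
end
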